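/- Let G = ⟨a_1, a_2, … | r_1, r_2, …⟩ be an arbitrary countable group, i.e. G = F_A/N where F_A is the free group on a countable alphabet A = {a_1, a_2, …} and N is the normal closure in F_A of a set of relators R = {r_1, r_2, …} ⊆ F_A. Let τ : F_A → F₂ be the homomorphism sending each generator a_i to the universal word a_i(x,y). Then the map γ : a_i ↦ a_i(x,y) induces a well-defined injective group homomorphism from G into the 2-generator group T_G = F₂/M, where M is the normal closure in F₂ of the set τ(R) = {r′_s(x,y) = r_s(a_{i_{s,1}}(x,y), …, a_{i_{s,k_s}}(x,y)) : s = 1, 2, …}; that is, the homomorphism G → T_G sending the coset of a_i to the coset of a_i(x,y) is injective. -/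

import Mathlib

/-- The free group of rank 2 on the generators `x` (index 0) and `y` (index 1). -/
abbrev F2 : Type := FreeGroup (Fin 2)

/-- The generator `x` of `F₂`. -/
def xx : F2 := FreeGroup.of 0

/-- The generator `y` of `F₂`. -/
def yy : F2 := FreeGroup.of 1

/-- `c_i = (x y^i)² x⁻¹`. -/
def cc (i : ℕ) : F2 := (xx * yy ^ i) ^ 2 * xx⁻¹

/-- The universal word `a_i(x,y) = y^{c_i} · y^{-x} = c_i⁻¹ y c_i · x⁻¹ y⁻¹ x`. -/
def aa (i : ℕ) : F2 := (cc i)⁻¹ * yy * cc i * (xx⁻¹ * yy⁻¹ * xx)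

namespace UE

variable (R : Set (FreeGroup ℕ))

abbrev Gq := FreeGroup ℕ ⧸ Subgroup.normalClosure R

def Ghat : ℕ → Gq R
  | 0 => 1
  | i + 1 => QuotientGroup.mk (FreeGroup.of i)

def psi : FreeGroup ℤ →* Gq R :=
  FreeGroup.lift fun j => if j < 0 then 1 else (Ghat R j.toNat)⁻¹ * Ghat R (j.toNat + 1)

def wprod : ℕ → FreeGroup ℤ
  | 0 => 1
  | i + 1 => wprod i * FreeGroup.of (i : ℤ)

lemma psi_wprod (i : ℕ) : psi R (wprod i) = Ghat R i := by
  induction i with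
  | zero => simp [wprod, Ghat]
  | succ i ih =>
    have h1 : psi R (FreeGroup.of (i:ℤ)) = (Ghat R i)⁻¹ * Ghat R (i+1) := by
      simp [psi, FreeGroup.lift_apply_of, Int.toNat_natCast]
    rw [wprod, map_mul, ih, h1, mul_inv_cancel_left]

/-- shift automorphism of `FreeGroup ℤ`, as a permutation. -/
def SP : Equiv.Perm (FreeGroup ℤ) := (FreeGroup.freeGroupCongr (Equiv.addRight (1:ℤ))).toEquiv

lemma SP_mul (a b : FreeGroup ℤ) : SP (a * b) = SP a * SP b :=
  (FreeGroup.freeGroupCongr (Equiv.addRight (1:ℤ))).map_mul a b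

lemma SP_of (j : ℤ) : SP (FreeGroup.of j) = FreeGroup.of (j + 1) := by
  simp [SP]

/-- left multiplication as a permutation -/
def LP (g : FreeGroup ℤ) : Equiv.Perm (FreeGroup ℤ) := Equiv.mulLeft g

lemma LP_apply (g w : FreeGroup ℤ) : LP g w = g * w := rfl

lemma LP_mul (a b : FreeGroup ℤ) : LP a * LP b = LP (a * b) := by
  apply Equiv.ext; intro w
  simp [LP, Equiv.Perm.mul_apply, mul_assoc]

lemma LP_inv (a : FreeGroup ℤ) : (LP a)⁻¹ = LP a⁻¹ := by
  apply Equiv.ext; intro w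
  simp [LP, Equiv.Perm.inv_def, Equiv.mulLeft_symm]

lemma SP_conj (g : FreeGroup ℤ) : SP * LP g * SP⁻¹ = LP (SP g) := by
  apply Equiv.ext; intro w
  simp [Equiv.Perm.mul_apply, LP_apply, SP_mul]

lemma SPpow_of (i : ℕ) : ∀ j : ℤ, (SP ^ i) (FreeGroup.of j) = FreeGroup.of (j + i) := by
  induction i with
  | zero => intro j; simp
  | succ i ih =>
    intro j
    rw [pow_succ, Equiv.Perm.mul_apply, SP_of, ih (j+1)]
    congr 1
    push_cast
    ring

lemma SPpow_conj (i : ℕ) (g : FreeGroup ℤ) : SP ^ i * LP g = LP ((SP ^ i) g) * SP ^ i := by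
  induction i with
  | zero => simp
  | succ i ih =>
    have h1 : SP ^ (i+1) = SP * SP ^ i := pow_succ' SP i
    have h2 : SP * LP ((SP ^ i) g) = LP (SP ((SP ^ i) g)) * SP := by
      have h3 := SP_conj ((SP ^ i) g)
      calc SP * LP ((SP ^ i) g) = (SP * LP ((SP ^ i) g) * SP⁻¹) * SP := by group
        _ = LP (SP ((SP ^ i) g)) * SP := by rw [h3]
    calc SP ^ (i+1) * LP g = SP * (SP ^ i * LP g) := by rw [h1, mul_assoc]
      _ = SP * LP ((SP ^ i) g) * SP ^ i := by rw [ih, mul_assoc]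
      _ = LP (SP ((SP ^ i) g)) * (SP * SP ^ i) := by rw [h2]; group
      _ = LP ((SP ^ (i+1)) g) * SP ^ (i+1) := by rw [← h1, h1, Equiv.Perm.mul_apply]


/-- the first-level "alphabet" permutation `α : w ↦ e₀ · S w`. -/
def alphaP : Equiv.Perm (FreeGroup ℤ) := LP (FreeGroup.of 0) * SP

lemma alphaP_pow (i : ℕ) : alphaP ^ i = LP (wprod i) * SP ^ i := by
  induction i with
  | zero => simp [wprod, LP]
  | succ i ih =>
    have hof : (SP ^ i) (FreeGroup.of 0) = FreeGroup.of (i : ℤ) := by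
      rw [SPpow_of]; norm_num
    calc alphaP ^ (i+1) = alphaP ^ i * alphaP := pow_succ alphaP i
      _ = LP (wprod i) * SP ^ i * (LP (FreeGroup.of 0) * SP) := by rw [ih]; rfl
      _ = LP (wprod i) * (SP ^ i * LP (FreeGroup.of 0)) * SP := by group
      _ = LP (wprod i) * (LP (FreeGroup.of (i:ℤ)) * SP ^ i) * SP := by rw [SPpow_conj, hof]
      _ = (LP (wprod i) * LP (FreeGroup.of (i:ℤ))) * (SP ^ i * SP) := by group
      _ = LP (wprod (i+1)) * SP ^ (i+1) := by rw [LP_mul, ← pow_succ]; rfl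

/-! ### the space `Om = FreeGroup ℤ × (Gq R × ℤ)` and its basic permutations -/

abbrev Om := FreeGroup ℤ × (Gq R × ℤ)

def kshift : Equiv.Perm (Gq R × ℤ) := Equiv.prodCongr (Equiv.refl _) (Equiv.addRight (1:ℤ))

def pc (e₁ : Equiv.Perm (FreeGroup ℤ)) (e₂ : Equiv.Perm (Gq R × ℤ)) : Equiv.Perm (Om R) :=
  Equiv.prodCongr e₁ e₂

lemma pc_apply (e₁ : Equiv.Perm (FreeGroup ℤ)) (e₂ : Equiv.Perm (Gq R × ℤ)) (w : FreeGroup ℤ)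
    (x : Gq R × ℤ) : pc R e₁ e₂ (w, x) = (e₁ w, e₂ x) := rfl

lemma pc_mul (a c : Equiv.Perm (FreeGroup ℤ)) (b d : Equiv.Perm (Gq R × ℤ)) :
    pc R a b * pc R c d = pc R (a * c) (b * d) :=
  Equiv.ext fun p => rfl

lemma pc_one : pc R 1 1 = 1 := Equiv.ext fun p => rfl

lemma pc_inv (a : Equiv.Perm (FreeGroup ℤ)) (b : Equiv.Perm (Gq R × ℤ)) :
    (pc R a b)⁻¹ = pc R a⁻¹ b⁻¹ :=
  Equiv.ext fun p => rfl

lemma pc_pow (a : Equiv.Perm (FreeGroup ℤ)) (b : Equiv.Perm (Gq R × ℤ)) (i : ℕ) :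
    (pc R a b) ^ i = pc R (a ^ i) (b ^ i) := by
  induction i with
  | zero => simp [pc_one]
  | succ i ih => rw [pow_succ, ih, pc_mul, ← pow_succ, ← pow_succ]

noncomputable def uperm : Equiv.Perm (Om R) where
  toFun p := (p.1, (psi R p.1 * p.2.1, p.2.2))
  invFun p := (p.1, ((psi R p.1)⁻¹ * p.2.1, p.2.2))
  left_inv := by rintro ⟨w, g, k⟩; simp
  right_inv := by rintro ⟨w, g, k⟩; simp

lemma uperm_apply (w : FreeGroup ℤ) (g : Gq R) (k : ℤ) :
    uperm R (w, (g, k)) = (w, (psi R w * g, k)) := rfl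

lemma uperm_inv_apply (w : FreeGroup ℤ) (g : Gq R) (k : ℤ) :
    (uperm R)⁻¹ (w, (g, k)) = (w, ((psi R w)⁻¹ * g, k)) := rfl

noncomputable def iot1 : Gq R →* Equiv.Perm (Om R) where
  toFun h :=
    { toFun := fun p => (p.1, (h * p.2.1, p.2.2))
      invFun := fun p => (p.1, (h⁻¹ * p.2.1, p.2.2))
      left_inv := by rintro ⟨w, g, k⟩; simp
      right_inv := by rintro ⟨w, g, k⟩; simp }
  map_one' := by apply Equiv.ext; rintro ⟨w, g, k⟩; simp
  map_mul' := by
    intro a b; apply Equiv.ext; rintro ⟨w, g, k⟩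
    simp [Equiv.Perm.mul_apply, mul_assoc]

lemma iot1_apply (h : Gq R) (w : FreeGroup ℤ) (g : Gq R) (k : ℤ) :
    iot1 R h (w, (g, k)) = (w, (h * g, k)) := rfl

/-- the fiber permutations -/
noncomputable def FF : ℤ → Equiv.Perm (Om R) := fun n =>
  if n = 1 then uperm R
  else if n = 0 then pc R alphaP 1
  else if n = -1 then pc R SP⁻¹ 1
  else if n = -2 then pc R SP (kshift R)
  else 1

lemma main_fiber (i : ℕ) (n : ℤ) :
    (FF R n ^ i * FF R (n-1) ^ i)⁻¹ * FF R (n+1) * (FF R n ^ i * FF R (n-1) ^ i) *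
      (FF R (n+1))⁻¹ = if n = 0 then iot1 R (Ghat R i) else 1 := by
  by_cases h0 : n = 0
  · subst h0
    have e1 : FF R (0:ℤ) = pc R alphaP 1 := by norm_num [FF]
    have e2 : FF R ((0:ℤ)-1) = pc R SP⁻¹ 1 := by norm_num [FF]
    have e3 : FF R ((0:ℤ)+1) = uperm R := by norm_num [FF]
    rw [e1, e2, e3, if_pos rfl]
    have hq : pc R alphaP 1 ^ i * pc R SP⁻¹ 1 ^ i = pc R (LP (wprod i)) 1 := by
      rw [pc_pow, pc_pow, pc_mul, one_pow, one_mul, alphaP_pow, inv_pow, mul_assoc,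
        mul_inv_cancel, mul_one]
    rw [hq]
    apply Equiv.ext; rintro ⟨w, g, k⟩
    rw [Equiv.Perm.mul_apply, Equiv.Perm.mul_apply, Equiv.Perm.mul_apply,
      uperm_inv_apply, pc_apply, uperm_apply, pc_inv, pc_apply, iot1_apply]
    simp only [Equiv.Perm.one_apply, inv_one, LP_apply, LP_inv, map_mul, psi_wprod]
    simp [mul_assoc, inv_mul_cancel_left]
  · by_cases h1 : n = -1
    · subst h1
      have e1 : FF R (-1:ℤ) = pc R SP⁻¹ 1 := by norm_num [FF]
      have e2 : FF R ((-1:ℤ)-1) = pc R SP (kshift R) := by norm_num [FF]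
      have e3 : FF R ((-1:ℤ)+1) = pc R alphaP 1 := by norm_num [FF]
      rw [e1, e2, e3, if_neg h0]
      simp only [pc_pow, pc_inv, pc_mul]
      rw [← pc_one R]
      congr 1
      · group
      · group
    · by_cases h2 : n = -2
      · subst h2
        have e1 : FF R (-2:ℤ) = pc R SP (kshift R) := by norm_num [FF]
        have e2 : FF R ((-2:ℤ)-1) = 1 := by norm_num [FF]
        have e3 : FF R ((-2:ℤ)+1) = pc R SP⁻¹ 1 := by norm_num [FF]
        rw [e1, e2, e3, if_neg h0, pc_pow, one_pow, mul_one]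
        simp only [pc_pow, pc_inv, pc_mul]
        rw [← pc_one R]
        congr 1
        · group
        · group
      · by_cases h3 : n = -3
        · subst h3
          have e1 : FF R (-3:ℤ) = 1 := by norm_num [FF]
          have e2 : FF R ((-3:ℤ)-1) = 1 := by norm_num [FF]
          have e3 : FF R ((-3:ℤ)+1) = pc R SP (kshift R) := by norm_num [FF]
          rw [e1, e2, e3, if_neg h0]
          group
        · have e3 : FF R (n+1) = 1 := by
            have c1 : ¬ (n + 1 = 1) := by omega
            have c2 : ¬ (n + 1 = 0) := by omega
            have c3 : ¬ (n + 1 = -1) := by omega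
            have c4 : ¬ (n + 1 = -2) := by omega
            simp [FF, c1, c2, c3, c4]
          rw [e3, if_neg h0]
          group

/-! ### the full space `Lam = ℤ × Om` -/

abbrev Lam := ℤ × Om R

noncomputable def DD : (ℤ → Equiv.Perm (Om R)) →* Equiv.Perm (Lam R) where
  toFun f :=
    { toFun := fun q => (q.1, f q.1 q.2)
      invFun := fun q => (q.1, (f q.1)⁻¹ q.2)
      left_inv := by rintro ⟨n, ω⟩; simp
      right_inv := by rintro ⟨n, ω⟩; simp }
  map_one' := by apply Equiv.ext; rintro ⟨n, ω⟩; simp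
  map_mul' := by
    intro a b; apply Equiv.ext; rintro ⟨n, ω⟩
    simp [Equiv.Perm.mul_apply]

lemma DD_apply (f : ℤ → Equiv.Perm (Om R)) (n : ℤ) (ω : Om R) :
    DD R f (n, ω) = (n, f n ω) := rfl

lemma DD_inv_apply (f : ℤ → Equiv.Perm (Om R)) (n : ℤ) (ω : Om R) :
    (DD R f)⁻¹ (n, ω) = (n, (f n)⁻¹ ω) := rfl

def Xp : Equiv.Perm (Lam R) where
  toFun q := (q.1 + 1, q.2)
  invFun q := (q.1 - 1, q.2)
  left_inv := by rintro ⟨n, ω⟩; simp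
  right_inv := by rintro ⟨n, ω⟩; simp

lemma Xp_apply (n : ℤ) (ω : Om R) : Xp R (n, ω) = (n + 1, ω) := rfl

lemma Xp_inv_apply (n : ℤ) (ω : Om R) : (Xp R)⁻¹ (n, ω) = (n - 1, ω) := rfl

lemma word_eval (f g : ℤ → Equiv.Perm (Om R)) :
    ((Xp R * DD R f) ^ 2 * (Xp R)⁻¹)⁻¹ * DD R g * ((Xp R * DD R f) ^ 2 * (Xp R)⁻¹) *
      ((Xp R)⁻¹ * (DD R g)⁻¹ * Xp R)
    = DD R (fun n => (f n * f (n-1))⁻¹ * g (n+1) * (f n * f (n-1)) * (g (n+1))⁻¹) := by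
  apply Equiv.ext; rintro ⟨n, ω⟩
  simp only [sq, mul_inv_rev, inv_inv, Equiv.Perm.mul_apply, Xp_apply, Xp_inv_apply,
    DD_apply, DD_inv_apply, add_sub_cancel_right, sub_add_cancel]

noncomputable def Yp : Equiv.Perm (Lam R) := DD R (FF R)

noncomputable def Th : F2 →* Equiv.Perm (Lam R) :=
  FreeGroup.lift ![Xp R, Yp R]

noncomputable def place0 : Gq R →* (ℤ → Equiv.Perm (Om R)) where
  toFun h := fun n => if n = 0 then iot1 R h else 1
  map_one' := by funext n; by_cases hn : n = 0 <;> simp [hn]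
  map_mul' := by
    intro a b; funext n
    by_cases hn : n = 0 <;> simp [hn, Pi.mul_apply]

noncomputable def iotK : Gq R →* Equiv.Perm (Lam R) := (DD R).comp (place0 R)

lemma Th_aa (i : ℕ) : Th R (aa i) = iotK R (Ghat R i) := by
  have hx : Th R xx = Xp R := by simp [Th, xx]
  have hy : Th R yy = Yp R := by simp [Th, yy]
  have hYi : Yp R ^ i = DD R (fun n => FF R n ^ i) := by
    rw [show (fun n => FF R n ^ i) = FF R ^ i from rfl, map_pow]; rfl
  have hyd : Yp R = DD R (FF R) := rfl
  rw [aa, cc]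
  simp only [map_mul, map_inv, map_pow, hx, hy]
  rw [hYi, hyd, word_eval R (fun n => FF R n ^ i) (FF R)]
  have hfun : (fun n => ((fun m => FF R m ^ i) n * (fun m => FF R m ^ i) (n-1))⁻¹ *
      FF R (n+1) * ((fun m => FF R m ^ i) n * (fun m => FF R m ^ i) (n-1)) * (FF R (n+1))⁻¹)
      = place0 R (Ghat R i) := by
    funext n
    simpa [place0] using main_fiber R i n
  rw [hfun]
  rfl

lemma iotK_inj : Function.Injective (iotK R) := by
  rw [injective_iff_map_eq_one]
  intro h hh
  have h0 : iotK R h ((0:ℤ), ((1 : FreeGroup ℤ), ((1 : Gq R), (0:ℤ))))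
      = ((0:ℤ), ((1 : FreeGroup ℤ), ((1 : Gq R), (0:ℤ)))) := by rw [hh]; rfl
  have h1 : iotK R h ((0:ℤ), ((1 : FreeGroup ℤ), ((1 : Gq R), (0:ℤ))))
      = ((0:ℤ), ((1 : FreeGroup ℤ), (h * 1, (0:ℤ)))) := by
    show DD R (place0 R h) _ = _
    rw [DD_apply]
    simp [place0, iot1_apply]
  rw [h1] at h0
  have h2 := congrArg (fun p => p.2.2.1) h0
  simpa using h2

end UE


/-- **Theorem 1.** For any countable group `G = ⟨a_1, a_2, … | r_1, r_2, …⟩`, presented as a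
quotient of the free group on the countable alphabet `{a_1, a_2, …}` (indexed by `ℕ`, index `i`
corresponding to `a_{i+1}`) by the normal closure of a relator set `R`, the map
`γ : a_i ↦ a_i(x,y)` induces a well-defined injective homomorphism of `G` into the 2-generator
group `T_G = ⟨x, y | r′_1(x,y), r′_2(x,y), …⟩`, the quotient of `F₂` by the normal closure of the
image of `R` under the substitution homomorphism `τ : a_i ↦ a_i(x,y)`. -/
theorem universal_embedding (R : Set (FreeGroup ℕ)) :
    ∃ φ : (FreeGroup ℕ ⧸ Subgroup.normalClosure R) →*
        (F2 ⧸ Subgroup.normalClosure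
          (⇑(FreeGroup.lift fun i : ℕ => aa (i + 1)) '' R)),
      Function.Injective φ ∧
      ∀ w : FreeGroup ℕ,
        φ (QuotientGroup.mk w)
          = QuotientGroup.mk ((FreeGroup.lift fun i : ℕ => aa (i + 1)) w) := by
  classical
  set τ : FreeGroup ℕ →* F2 := FreeGroup.lift fun i : ℕ => aa (i + 1) with hτ
  set N : Subgroup (FreeGroup ℕ) := Subgroup.normalClosure R with hN
  set M : Subgroup F2 := Subgroup.normalClosure (⇑τ '' R) with hM
  have hker : N ≤ ((QuotientGroup.mk' M).comp τ).ker := by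
    apply Subgroup.normalClosure_le_normal
    intro r hr
    have : τ r ∈ M := Subgroup.subset_normalClosure ⟨r, hr, rfl⟩
    simpa [MonoidHom.mem_ker, QuotientGroup.eq_one_iff] using this
  refine ⟨QuotientGroup.lift N ((QuotientGroup.mk' M).comp τ) hker, ?_, ?_⟩
  · -- injectivity
    rw [injective_iff_map_eq_one]
    intro a
    induction a using QuotientGroup.induction_on with
    | _ w =>
      intro ha
      have hw : τ w ∈ M := by
        rw [QuotientGroup.lift_mk] at ha
        simpa [MonoidHom.mem_ker, QuotientGroup.eq_one_iff] using ha
      have hcomp : (UE.Th R).comp τ = (UE.iotK R).comp (QuotientGroup.mk' N) := by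
        apply FreeGroup.ext_hom
        intro i
        have h1 : τ (FreeGroup.of i) = aa (i + 1) := by
          rw [hτ]; exact FreeGroup.lift_apply_of
        rw [MonoidHom.comp_apply, MonoidHom.comp_apply, h1, UE.Th_aa]
        rfl
      have hMker : M ≤ (UE.Th R).ker := by
        apply Subgroup.normalClosure_le_normal
        rintro x ⟨r, hr, rfl⟩
        have hrN : QuotientGroup.mk' N r = 1 := by
          simpa [QuotientGroup.eq_one_iff] using Subgroup.subset_normalClosure hr
        have : UE.Th R (τ r) = UE.iotK R (QuotientGroup.mk' N r) := by
          have := DFunLike.congr_fun hcomp r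
          simpa using this
        simp [MonoidHom.mem_ker, this, hrN]
      have h2 : UE.Th R (τ w) = 1 := hMker hw
      have h3 : UE.iotK R (QuotientGroup.mk' N w) = 1 := by
        have := DFunLike.congr_fun hcomp w
        simp only [MonoidHom.comp_apply] at this
        rw [← this, h2]
      have h4 : QuotientGroup.mk' N w = 1 := UE.iotK_inj R (by rw [h3, map_one])
      simpa [QuotientGroup.eq_one_iff] using h4
  · intro w
    rw [QuotientGroup.lift_mk]
    rfl
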